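/- (Well-formed derivations are valid) In the extended CBN^γ system with the unused attribute U, if Γ ⊢_CBN e :^γ τ and all types in Γ are well formed with respect to their associated vectors (WF Γ), then γ ⊢_WF τ, i.e., 𝕃(γ) = 𝕃(γ + 𝔼(τ)), where 𝔼(τ) sums all latent attribute vectors appearing in positive positions of τ. -/
import Mathlib


/-! # Extended CBN^γ with unused-variable tracking (Section 6) -/

/-- Extended strictness attributes: S (strict), Q (unknown, written `?`),
L (lazy), U (unused). -/
inductive Attr : Type
  | S | Q | L | U
deriving DecidableEq

/-- Addition on extended attributes: `U` is the identity; on {S, ?, L}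
addition is as before. -/
def Attr.add : Attr → Attr → Attr
  | .U, b => b
  | a, .U => a
  | .S, _ => .S
  | _, .S => .S
  | .Q, _ => .Q
  | _, .Q => .Q
  | .L, .L => .L

/-- The extended information order, generated by `? ≤ L`, `? ≤ S`, `L ≤ U`. -/
def Attr.le (a b : Attr) : Prop := a = b ∨ a = .Q ∨ (a = .L ∧ b = .U)

/-- Lazify: `U ↦ U`, everything else to `L`. -/
def Attr.lazify : Attr → Attr
  | .U => .U
  | _ => .L

abbrev Var := String

/-- Attribute vectors: total maps into extended attributes, with the
identity `U` playing the role of absence. -/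
abbrev Vec := Var → Attr

def Vec.add (g1 g2 : Vec) : Vec := fun x => (g1 x).add (g2 x)
def Vec.le (g1 g2 : Vec) : Prop := ∀ x, (g1 x).le (g2 x)
def Vec.lazify (g : Vec) : Vec := fun x => (g x).lazify
/-- The all-unused vector `Ū`. -/
def Vec.unused : Vec := fun _ => Attr.U
def Vec.single (x : Var) (a : Attr) : Vec := fun y => if y = x then a else Attr.U
/-- Remove `x` from a vector (the operation `⇂x`). -/
def Vec.drop (g : Vec) (x : Var) : Vec := fun y => if y = x then Attr.U else g y

/-- CBN types. -/
inductive NTy : Type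
  | unit : NTy
  | prod : NTy → Vec → NTy → Vec → NTy
  | sum : NTy → Vec → NTy → Vec → NTy
  | arr : Var → Attr → NTy → Vec → Vec → NTy → NTy

/-- Remove a variable from all vectors in a CBN type. -/
def NTy.drop : NTy → Var → NTy
  | .unit, _ => .unit
  | .prod τ1 g1 τ2 g2, x =>
      .prod (τ1.drop x) (g1.drop x) (τ2.drop x) (g2.drop x)
  | .sum τ1 g1 τ2 g2, x =>
      .sum (τ1.drop x) (g1.drop x) (τ2.drop x) (g2.drop x)
  | .arr y α τ1 g1 g2 τ2, x =>
      .arr y α (τ1.drop x) (g1.drop x) (g2.drop x) (τ2.drop x)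

/-- The effects-of function `𝔼(τ)`: sums all latent vectors in positive
positions of a type. -/
def NTy.eff : NTy → Vec
  | .unit => Vec.unused
  | .prod τ1 g1 τ2 g2 => ((g1.add g2).add τ1.eff).add τ2.eff
  | .sum τ1 g1 τ2 g2 => ((g1.add g2).add τ1.eff).add τ2.eff
  | .arr x _ τ1 _ g2 τ2 => (g2.add τ1.eff).add (τ2.eff.drop x)

mutual
/-- `γ ⊢_WF τ`: τ is well formed and `𝕃(γ) = 𝕃(γ + 𝔼(τ))`. -/
inductive WFv : Vec → NTy → Prop
  | mk {γ τ} : WFt τ → γ.lazify = (γ.add τ.eff).lazify → WFv γ τ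
/-- `WF τ`: structural well-formedness of a type (Figure 16). -/
inductive WFt : NTy → Prop
  | unit : WFt .unit
  | prod {τ1 g1 τ2 g2} : WFv g1 τ1 → WFv g2 τ2 → WFt (.prod τ1 g1 τ2 g2)
  | sum {τ1 g1 τ2 g2} : WFv g1 τ1 → WFv g2 τ2 → WFt (.sum τ1 g1 τ2 g2)
  | arr {x α τ1 g1 g2 τ2} : WFv g1 τ1 → WFv g2 (τ2.drop x) →
      WFt (.arr x α τ1 g1 g2 τ2)
end

/-- CBN expressions. -/
inductive Tm : Type
  | unit : Tm
  | var : Var → Tm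
  | inl : Tm → Tm
  | inr : Tm → Tm
  | pair : Tm → Tm → Tm
  | lam : Var → Tm → Tm
  | app : Tm → Tm → Tm
  | letin : Var → Tm → Tm → Tm
  | sub : Tm → Tm
  | seq : Tm → Tm → Tm
  | split : Var → Var → Tm → Tm → Tm
  | case : Tm → Var → Tm → Var → Tm → Tm

abbrev NCtx := Var → Option (NTy × Vec)

def NCtx.ext (Γ : NCtx) (x : Var) (τ : NTy) (γ : Vec) : NCtx :=
  fun y => if y = x then some (τ, γ) else Γ y

/-- `WF Γ`: all types in the context are well formed with respect to
their associated vectors. -/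
def WFCtx (Γ : NCtx) : Prop := ∀ x τ γ, Γ x = some (τ, γ) → WFv γ τ

/-- Extended CBN typing `Γ ⊢_CBN e :^γ τ` (Figure 17). -/
inductive NHasTy : NCtx → Tm → Vec → NTy → Prop
  | var {Γ : NCtx} {x τ γ} : Γ x = some (τ, γ) →
      NHasTy Γ (.var x) (γ.add (Vec.single x .S)) τ
  | unit {Γ} : NHasTy Γ .unit Vec.unused .unit
  | pair {Γ e1 e2 γ1 γ2 τ1 τ2} :
      NHasTy Γ e1 γ1 τ1 → NHasTy Γ e2 γ2 τ2 →
      NHasTy Γ (.pair e1 e2) (γ1.add γ2).lazify (.prod τ1 γ1 τ2 γ2)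
  | inl {Γ e γ1 τ1} (τ2 : NTy) (γ2 : Vec) :
      NHasTy Γ e γ1 τ1 →
      γ1.lazify = γ2.lazify →
      WFv γ2 τ2 →
      NHasTy Γ (.inl e) ((γ1.add γ2).add τ2.eff).lazify (.sum τ1 γ1 τ2 γ2)
  | inr {Γ e γ2 τ2} (τ1 : NTy) (γ1 : Vec) :
      NHasTy Γ e γ2 τ2 →
      γ1.lazify = γ2.lazify →
      WFv γ1 τ1 →
      NHasTy Γ (.inr e) ((γ1.add γ2).add τ1.eff).lazify (.sum τ1 γ1 τ2 γ2)
  | sub {Γ e γ γ' τ} : NHasTy Γ e γ' τ → Vec.le γ γ' →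
      NHasTy Γ (.sub e) γ τ
  | letin {Γ x e1 e2 γ1 γ2 τ1 τ2} :
      NHasTy Γ e1 γ1 τ1 →
      NHasTy (Γ.ext x τ1 γ1) e2 γ2 τ2 →
      NHasTy Γ (.letin x e1 e2) (γ1.lazify.add (γ2.drop x)) (τ2.drop x)
  | lam {Γ x e γ γ1 τ1 τ2} :
      NHasTy (Γ.ext x τ1 γ1) e γ τ2 →
      WFv γ1 τ1 →
      (τ2.eff.drop x).lazify = (γ1.add (τ2.eff.drop x)).lazify →
      NHasTy Γ (.lam x e) (γ1.add (γ.drop x)).lazify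
        (.arr x (γ x) τ1 γ1 (γ.drop x) τ2)
  | app {Γ e1 e2 x α γ1 γ2 γ3 τ1 τ2} :
      NHasTy Γ e1 γ1 (.arr x α τ1 γ2 γ3 τ2) →
      NHasTy Γ e2 γ2 τ1 →
      NHasTy Γ (.app e1 e2) ((γ1.add γ3).add γ2.lazify) (τ2.drop x)
  | seq {Γ e1 e2 γ1 γ2 τ} :
      NHasTy Γ e1 γ1 .unit → NHasTy Γ e2 γ2 τ →
      NHasTy Γ (.seq e1 e2) (γ1.add γ2) τ
  | split {Γ x1 x2 e1 e2 γ1 γ2 g1 g2 τ1 τ2 τ} :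
      NHasTy Γ e1 γ1 (.prod τ1 g1 τ2 g2) →
      NHasTy ((Γ.ext x1 τ1 g1).ext x2 τ2 g2) e2 γ2 τ →
      NHasTy Γ (.split x1 x2 e1 e2)
        (γ1.add ((γ2.drop x1).drop x2)) ((τ.drop x1).drop x2)
  | case {Γ e1 x1 e2 x2 e3 γ1 g2 g3 g1' g2' τ1 τ2 τ1' τ2'} :
      NHasTy Γ e1 γ1 (.sum τ1 g1' τ2 g2') →
      NHasTy (Γ.ext x1 τ1 g1') e2 g2 τ1' →
      NHasTy (Γ.ext x2 τ2 g2') e3 g3 τ2' →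
      g2.drop x1 = g3.drop x2 →
      τ1'.drop x1 = τ2'.drop x2 →
      NHasTy Γ (.case e1 x1 e2 x2 e3) (γ1.add (g2.drop x1)) (τ1'.drop x1)

/-! ## Auxiliary lemmas -/

lemma Attr.add_U_iff (a b : Attr) : a.add b = .U ↔ a = .U ∧ b = .U := by
  cases a <;> cases b <;> decide

lemma Attr.lazify_U_iff (a : Attr) : a.lazify = .U ↔ a = .U := by
  cases a <;> decide

lemma Attr.lazify_add_iff (a b : Attr) :
    a.lazify = (a.add b).lazify ↔ (a = .U → b = .U) := by
  cases a <;> cases b <;> decide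

lemma Vec.lazify_add_iff (γ δ : Vec) :
    γ.lazify = (γ.add δ).lazify ↔ ∀ x, γ x = .U → δ x = .U := by
  constructor
  · intro h x hx
    exact (Attr.lazify_add_iff (γ x) (δ x)).mp (congrFun h x) hx
  · intro h
    funext x
    exact (Attr.lazify_add_iff (γ x) (δ x)).mpr (h x)

lemma WFv_iff {γ : Vec} {τ : NTy} :
    WFv γ τ ↔ WFt τ ∧ ∀ x, γ x = .U → τ.eff x = .U := by
  constructor
  · rintro ⟨ht, he⟩; exact ⟨ht, (Vec.lazify_add_iff _ _).mp he⟩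
  · rintro ⟨ht, hd⟩; exact ⟨ht, (Vec.lazify_add_iff _ _).mpr hd⟩

lemma WFv.wft {γ : Vec} {τ : NTy} (h : WFv γ τ) : WFt τ := (WFv_iff.mp h).1

lemma WFv.dom {γ : Vec} {τ : NTy} (h : WFv γ τ) :
    ∀ x, γ x = .U → τ.eff x = .U := (WFv_iff.mp h).2

lemma Vec.drop_add (g1 g2 : Vec) (x : Var) :
    (g1.add g2).drop x = (g1.drop x).add (g2.drop x) := by
  funext y; by_cases h : y = x <;> simp [Vec.drop, Vec.add, h, Attr.add]

lemma Vec.drop_unused (x : Var) : Vec.unused.drop x = Vec.unused := by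
  funext y; by_cases h : y = x <;> simp [Vec.drop, Vec.unused, h]

lemma Vec.drop_comm (g : Vec) (a b : Var) :
    (g.drop a).drop b = (g.drop b).drop a := by
  funext y; by_cases h1 : y = a <;> by_cases h2 : y = b <;>
    simp [Vec.drop, h1, h2]

lemma NTy.drop_comm : ∀ (τ : NTy) (a b : Var),
    (τ.drop a).drop b = (τ.drop b).drop a
  | .unit, _, _ => rfl
  | .prod τ1 g1 τ2 g2, a, b => by
      simp only [NTy.drop]
      rw [NTy.drop_comm τ1 a b, NTy.drop_comm τ2 a b,
        Vec.drop_comm g1 a b, Vec.drop_comm g2 a b]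
  | .sum τ1 g1 τ2 g2, a, b => by
      simp only [NTy.drop]
      rw [NTy.drop_comm τ1 a b, NTy.drop_comm τ2 a b,
        Vec.drop_comm g1 a b, Vec.drop_comm g2 a b]
  | .arr y α τ1 g1 g2 τ2, a, b => by
      simp only [NTy.drop]
      rw [NTy.drop_comm τ1 a b, NTy.drop_comm τ2 a b,
        Vec.drop_comm g1 a b, Vec.drop_comm g2 a b]

lemma NTy.eff_drop : ∀ (τ : NTy) (x : Var), (τ.drop x).eff = τ.eff.drop x
  | .unit, x => (Vec.drop_unused x).symm
  | .prod τ1 g1 τ2 g2, x => by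
      simp only [NTy.drop, NTy.eff, Vec.drop_add,
        NTy.eff_drop τ1 x, NTy.eff_drop τ2 x]
  | .sum τ1 g1 τ2 g2, x => by
      simp only [NTy.drop, NTy.eff, Vec.drop_add,
        NTy.eff_drop τ1 x, NTy.eff_drop τ2 x]
  | .arr y α τ1 g1 g2 τ2, x => by
      simp only [NTy.drop, NTy.eff, Vec.drop_add,
        NTy.eff_drop τ1 x, NTy.eff_drop τ2 x]
      rw [Vec.drop_comm]

lemma lazify_eq_drop {γ : Vec} {τ : NTy}
    (he : γ.lazify = (γ.add τ.eff).lazify) (x : Var) :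
    (γ.drop x).lazify = ((γ.drop x).add (τ.drop x).eff).lazify := by
  rw [Vec.lazify_add_iff] at he ⊢
  intro y hy
  rw [NTy.eff_drop]
  by_cases h : y = x
  · simp [Vec.drop, h]
  · simp only [Vec.drop, if_neg h] at hy ⊢
    exact he y hy

/-- Size of a type (number of constructors); `drop` preserves it. -/
def NTy.size : NTy → Nat
  | .unit => 1
  | .prod τ1 _ τ2 _ => τ1.size + τ2.size + 1
  | .sum τ1 _ τ2 _ => τ1.size + τ2.size + 1
  | .arr _ _ τ1 _ _ τ2 => τ1.size + τ2.size + 1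

lemma NTy.size_drop : ∀ (τ : NTy) (x : Var), (τ.drop x).size = τ.size
  | .unit, _ => rfl
  | .prod τ1 _ τ2 _, x => by
      simp [NTy.drop, NTy.size, NTy.size_drop τ1 x, NTy.size_drop τ2 x]
  | .sum τ1 _ τ2 _, x => by
      simp [NTy.drop, NTy.size, NTy.size_drop τ1 x, NTy.size_drop τ2 x]
  | .arr _ _ τ1 _ _ τ2, x => by
      simp [NTy.drop, NTy.size, NTy.size_drop τ1 x, NTy.size_drop τ2 x]

mutual
theorem WFt.drop_var {τ : NTy} (h : WFt τ) (x : Var) : WFt (τ.drop x) :=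
  match h with
  | .unit => .unit
  | .prod h1 h2 => .prod (h1.drop_var x) (h2.drop_var x)
  | .sum h1 h2 => .sum (h1.drop_var x) (h2.drop_var x)
  | @WFt.arr y α τ1 g1 g2 τ2 h1 h2 =>
      .arr (h1.drop_var x)
        ((congrArg (WFv (g2.drop x)) (NTy.drop_comm τ2 y x)).mp (h2.drop_var x))
  termination_by (τ.size, 0)
  decreasing_by all_goals
    apply Prod.Lex.left
    simp only [NTy.size, NTy.size_drop]
    omega
theorem WFv.drop_var {γ : Vec} {τ : NTy} (h : WFv γ τ) (x : Var) :
    WFv (γ.drop x) (τ.drop x) :=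
  match h with
  | .mk ht he => .mk (ht.drop_var x) (lazify_eq_drop he x)
  termination_by (τ.size, 1)
  decreasing_by all_goals exact Prod.Lex.right _ (by omega)
end

lemma vadd_U {g1 g2 : Vec} {x : Var} :
    (g1.add g2) x = .U ↔ g1 x = .U ∧ g2 x = .U := Attr.add_U_iff _ _

lemma vlazify_U {g : Vec} {x : Var} : g.lazify x = .U ↔ g x = .U :=
  Attr.lazify_U_iff _

lemma WFCtx.ext' {Γ : NCtx} (hΓ : WFCtx Γ) {x : Var} {τ : NTy} {γ : Vec}
    (h : WFv γ τ) : WFCtx (Γ.ext x τ γ) := by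
  intro y τ' γ' hy
  by_cases hxy : y = x
  · simp only [NCtx.ext, if_pos hxy, Option.some.injEq, Prod.mk.injEq] at hy
    rw [← hy.1, ← hy.2]; exact h
  · simp only [NCtx.ext, if_neg hxy] at hy
    exact hΓ y τ' γ' hy

/-- Well-formed derivations are valid: the vector of a typing derivation in
a well-formed context validates its type, i.e. `γ ⊢_WF τ`
(`𝕃(γ) = 𝕃(γ + 𝔼(τ))`). -/
theorem wf_derivations_valid {Γ : NCtx} {e : Tm} {γ : Vec} {τ : NTy}
    (hΓ : WFCtx Γ) (h : NHasTy Γ e γ τ) : WFv γ τ := by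
  revert hΓ
  induction h with
  | var hx =>
      intro hΓ
      have hv := hΓ _ _ _ hx
      refine WFv_iff.mpr ⟨hv.wft, fun y hy => ?_⟩
      exact hv.dom y (vadd_U.mp hy).1
  | unit =>
      intro _
      exact WFv_iff.mpr ⟨.unit, fun y _ => rfl⟩
  | pair h1 h2 ih1 ih2 =>
      intro hΓ
      have hv1 := ih1 hΓ; have hv2 := ih2 hΓ
      refine WFv_iff.mpr ⟨.prod hv1 hv2, fun y hy => ?_⟩
      obtain ⟨h1u, h2u⟩ := vadd_U.mp (vlazify_U.mp hy)
      simp only [NTy.eff]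
      exact vadd_U.mpr ⟨vadd_U.mpr ⟨vadd_U.mpr ⟨h1u, h2u⟩, hv1.dom y h1u⟩,
        hv2.dom y h2u⟩
  | inl τ2 γ2 h1 _ hv2 ih1 =>
      intro hΓ
      have hv1 := ih1 hΓ
      refine WFv_iff.mpr ⟨.sum hv1 hv2, fun y hy => ?_⟩
      obtain ⟨⟨h1u, h2u⟩, h3u⟩ :=
        (vadd_U.mp (vlazify_U.mp hy)).imp vadd_U.mp id
      simp only [NTy.eff]
      exact vadd_U.mpr ⟨vadd_U.mpr ⟨vadd_U.mpr ⟨h1u, h2u⟩, hv1.dom y h1u⟩, h3u⟩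
  | inr τ1 γ1 h2 _ hv1 ih2 =>
      intro hΓ
      have hv2 := ih2 hΓ
      refine WFv_iff.mpr ⟨.sum hv1 hv2, fun y hy => ?_⟩
      obtain ⟨⟨h1u, h2u⟩, h3u⟩ :=
        (vadd_U.mp (vlazify_U.mp hy)).imp vadd_U.mp id
      simp only [NTy.eff]
      exact vadd_U.mpr ⟨vadd_U.mpr ⟨vadd_U.mpr ⟨h1u, h2u⟩, h3u⟩, hv2.dom y h2u⟩
  | sub h1 hle ih1 =>
      intro hΓ
      have hv := ih1 hΓ
      refine WFv_iff.mpr ⟨hv.wft, fun y hy => ?_⟩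
      rcases hle y with h | h | ⟨h, _⟩
      · exact hv.dom y (h ▸ hy)
      · rw [hy] at h; cases h
      · rw [hy] at h; cases h
  | letin h1 h2 ih1 ih2 =>
      intro hΓ
      have hv1 := ih1 hΓ
      have hv2 := ih2 (hΓ.ext' hv1)
      exact WFv_iff.mpr ⟨(hv2.drop_var _).wft,
        fun y hy => (hv2.drop_var _).dom y (vadd_U.mp hy).2⟩
  | lam h1 hv1 _ ih1 =>
      intro hΓ
      have hv := ih1 (hΓ.ext' hv1)
      refine WFv_iff.mpr ⟨.arr hv1 (hv.drop_var _), fun y hy => ?_⟩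
      obtain ⟨h1u, h2u⟩ := vadd_U.mp (vlazify_U.mp hy)
      simp only [NTy.eff]
      refine vadd_U.mpr ⟨vadd_U.mpr ⟨h2u, hv1.dom y h1u⟩, ?_⟩
      have hd := (hv.drop_var _).dom y h2u
      rwa [NTy.eff_drop] at hd
  | app h1 h2 ih1 ih2 =>
      intro hΓ
      have hv1 := ih1 hΓ
      rcases hv1.wft with _ | _ | _ | ⟨hg2, hg3⟩
      refine WFv_iff.mpr ⟨hg3.wft, fun y hy => ?_⟩
      obtain ⟨⟨_, h3u⟩, _⟩ := (vadd_U.mp hy).imp vadd_U.mp id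
      exact hg3.dom y h3u
  | seq h1 h2 ih1 ih2 =>
      intro hΓ
      have hv2 := ih2 hΓ
      refine WFv_iff.mpr ⟨hv2.wft, fun y hy => ?_⟩
      exact hv2.dom y (vadd_U.mp hy).2
  | split h1 h2 ih1 ih2 =>
      intro hΓ
      have hv1 := ih1 hΓ
      rcases hv1.wft with _ | ⟨hg1, hg2⟩
      have hv2 := ih2 ((hΓ.ext' hg1).ext' hg2)
      exact WFv_iff.mpr ⟨((hv2.drop_var _).drop_var _).wft,
        fun y hy => ((hv2.drop_var _).drop_var _).dom y (vadd_U.mp hy).2⟩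
  | case h1 h2 h3 heq1 heq2 ih1 ih2 ih3 =>
      intro hΓ
      have hv1 := ih1 hΓ
      rcases hv1.wft with _ | _ | ⟨hg1, hg2⟩
      have hv2 := ih2 (hΓ.ext' hg1)
      exact WFv_iff.mpr ⟨(hv2.drop_var _).wft,
        fun y hy => (hv2.drop_var _).dom y (vadd_U.mp hy).2⟩
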